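/- Let d ≥ 2 and k be integers with 1 ≤ k ≤ d+1, and let β be a real number satisfying: β = (k + √(k(d+1)(d+2−k)))/(k(d+1−k)) or β = (k − √(k(d+1)(d+2−k)))/(k(d+1−k)) if 2 ≤ k ≤ d; β = 1 + 2/d if k = 1; and β = −(d+2)/(2(d+1)) if k = d+1. Then a point x ∈ H_d satisfies: x ∈ T_d(k,β) for some pair (k,β) obeying these conditions if and only if R_d ∪ {x} is a 2-distance set in H_d. -/

import Mathlib

noncomputable section

open scoped BigOperators Classical

/-- The set of Euclidean distances between distinct points of `X`. -/
def distSet {m : ℕ} (X : Set (EuclideanSpace ℝ (Fin m))) : Set ℝ :=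
  {r | ∃ x ∈ X, ∃ y ∈ X, x ≠ y ∧ dist x y = r}

/-- `X` is a 2-distance set: exactly two distances occur between distinct points. -/
def IsTwoDistSet {m : ℕ} (X : Set (EuclideanSpace ℝ (Fin m))) : Prop :=
  (distSet X).ncard = 2

/-- The affine hyperplane `H_d = {x ∈ ℝ^{d+1} : ∑ x_i = 1}`. -/
def Hplane (d : ℕ) : Set (EuclideanSpace ℝ (Fin (d+1))) :=
  {x | ∑ i, x i = 1}

/-- The regular simplex `R_d`: the standard basis vectors of `ℝ^{d+1}`. -/
def simplex (d : ℕ) : Set (EuclideanSpace ℝ (Fin (d+1))) :=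
  Set.range (fun i => EuclideanSpace.single i (1:ℝ))

/-- The constant `c = (1 - (d+1-k)β)/(d+1)`. -/
def cval (d k : ℕ) (β : ℝ) : ℝ := (1 - ((d:ℝ) + 1 - (k:ℝ)) * β) / ((d:ℝ) + 1)

/-- The set `T_d(k,β)` of points of `H_d` all of whose coordinates lie in `{c, c+β}`,
with exactly `k` coordinates equal to `c`. -/
def Tset (d k : ℕ) (β : ℝ) : Set (EuclideanSpace ℝ (Fin (d+1))) :=
  {x | x ∈ Hplane d ∧ (∀ i, x i = cval d k β ∨ x i = cval d k β + β) ∧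
    {i | x i = cval d k β}.ncard = k}

/-- The condition of Proposition 1 on `β` (given `d` and `k`). -/
def betaCond (d k : ℕ) (β : ℝ) : Prop :=
  (k = 1 ∧ β = 1 + 2/(d:ℝ)) ∨
  (k = d + 1 ∧ β = -((d:ℝ)+2)/(2*((d:ℝ)+1))) ∨
  (2 ≤ k ∧ k ≤ d ∧
    (β = ((k:ℝ) + Real.sqrt ((k:ℝ)*((d:ℝ)+1)*((d:ℝ)+2-(k:ℝ))))/((k:ℝ)*((d:ℝ)+1-(k:ℝ))) ∨
     β = ((k:ℝ) - Real.sqrt ((k:ℝ)*((d:ℝ)+1)*((d:ℝ)+2-(k:ℝ))))/((k:ℝ)*((d:ℝ)+1-(k:ℝ)))))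

namespace TwoDistAux

def bvec (d : ℕ) (i : Fin (d+1)) : EuclideanSpace ℝ (Fin (d+1)) :=
  EuclideanSpace.single i (1:ℝ)

lemma dist_sq_single {d : ℕ} (x : EuclideanSpace ℝ (Fin (d+1))) (i : Fin (d+1)) :
    dist x (bvec d i) ^ 2 = (∑ j, x j ^ 2) + 1 - 2 * x i := by
  rw [bvec, EuclideanSpace.dist_eq, Real.sq_sqrt (by positivity)]
  simp_rw [Real.dist_eq, sq_abs]
  have h : ∀ j ∈ Finset.univ, (x j - EuclideanSpace.single i (1:ℝ) j)^2
      = x j ^2 - 2 * x j * (if j = i then (1:ℝ) else 0) + (if j = i then (1:ℝ) else 0) := by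
    intro j _
    rw [EuclideanSpace.single_apply]
    by_cases hji : j = i <;> (simp [hji]; try ring)
  rw [Finset.sum_congr rfl h, Finset.sum_add_distrib, Finset.sum_sub_distrib]
  simp_rw [mul_ite, mul_one, mul_zero]
  rw [Finset.sum_ite_eq' Finset.univ i, Finset.sum_ite_eq' Finset.univ i]
  simp
  ring

lemma dist_single {d : ℕ} (x : EuclideanSpace ℝ (Fin (d+1))) (i : Fin (d+1)) :
    dist x (bvec d i) = Real.sqrt ((∑ j, x j ^ 2) + 1 - 2 * x i) := by
  rw [← dist_sq_single x i, Real.sqrt_sq dist_nonneg]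

lemma dist_single_ne {d : ℕ} (x : EuclideanSpace ℝ (Fin (d+1))) {i j : Fin (d+1)}
    (h : x i ≠ x j) : dist x (bvec d i) ≠ dist x (bvec d j) := by
  intro he
  have h1 := dist_sq_single x i
  have h2 := dist_sq_single x j
  rw [he] at h1
  apply h; linarith

lemma bvec_ne {d : ℕ} {i j : Fin (d+1)} (h : i ≠ j) : bvec d i ≠ bvec d j := by
  intro he
  have h2 : bvec d i i = bvec d j i := by rw [he]
  have e1 : bvec d i i = 1 := by simp [bvec, EuclideanSpace.single_apply]
  have e2 : bvec d j i = 0 := by simp [bvec, EuclideanSpace.single_apply, h]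
  rw [e1, e2] at h2
  norm_num at h2

lemma dist_bvec {d : ℕ} {i j : Fin (d+1)} (h : i ≠ j) :
    dist (bvec d i) (bvec d j) = Real.sqrt 2 := by
  have hs : ∑ l, (bvec d i l) ^ 2 = 1 := by
    simp_rw [bvec, EuclideanSpace.single_apply]
    simp [Finset.sum_ite_eq' Finset.univ i]
  have h2 : bvec d i j = 0 := by
    simp [bvec, EuclideanSpace.single_apply, (Ne.symm h)]
  rw [show dist (bvec d i) (bvec d j) = dist (bvec d i) (bvec d j) from rfl]
  rw [show (Real.sqrt 2) = Real.sqrt ((∑ l, (bvec d i l) ^ 2) + 1 - 2 * bvec d i j) by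
    rw [hs, h2]; norm_num]
  exact dist_single (bvec d i) j

lemma zero_ne_one_fin {d : ℕ} (hd : 2 ≤ d) : (0 : Fin (d+1)) ≠ 1 := by
  apply Fin.ne_of_val_ne
  rw [Fin.val_zero, Fin.val_one', Nat.mod_eq_of_lt (by omega)]
  omega

lemma mem_simplex {d : ℕ} {y : EuclideanSpace ℝ (Fin (d+1))} :
    y ∈ simplex d ↔ ∃ i, y = bvec d i := by
  constructor
  · rintro ⟨i, rfl⟩; exact ⟨i, rfl⟩
  · rintro ⟨i, rfl⟩; exact ⟨i, rfl⟩

lemma distSet_union {d : ℕ} (hd : 2 ≤ d) (x : EuclideanSpace ℝ (Fin (d+1)))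
    (hxs : x ∉ simplex d) :
    distSet (simplex d ∪ {x}) =
      {Real.sqrt 2} ∪ Set.range (fun i => dist x (bvec d i)) := by
  ext r
  constructor
  · rintro ⟨p, hp, q, hq, hpq, rfl⟩
    rcases hp with hp | hp
    · rcases mem_simplex.mp hp with ⟨i, rfl⟩
      rcases hq with hq | hq
      · rcases mem_simplex.mp hq with ⟨j, rfl⟩
        have hij : i ≠ j := fun h => hpq (by rw [h])
        exact Or.inl (by simp [dist_bvec hij])
      · rcases hq with rfl
        exact Or.inr ⟨i, by rw [dist_comm]⟩
    · rcases hp with rfl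
      rcases hq with hq | hq
      · rcases mem_simplex.mp hq with ⟨j, rfl⟩
        exact Or.inr ⟨j, rfl⟩
      · rcases hq with rfl
        exact absurd rfl hpq
  · rintro (hr | ⟨i, rfl⟩)
    · rcases hr with rfl
      exact ⟨bvec d 0, Or.inl ⟨0, rfl⟩, bvec d 1, Or.inl ⟨1, rfl⟩,
        bvec_ne (zero_ne_one_fin hd), dist_bvec (zero_ne_one_fin hd)⟩
    · exact ⟨x, Or.inr rfl, bvec d i, Or.inl ⟨i, rfl⟩,
        fun h => hxs (mem_simplex.mpr ⟨i, h⟩), rfl⟩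

lemma distSet_simplex {d : ℕ} (hd : 2 ≤ d) : distSet (simplex d) = {Real.sqrt 2} := by
  ext r
  constructor
  · rintro ⟨p, hp, q, hq, hpq, rfl⟩
    rcases mem_simplex.mp hp with ⟨i, rfl⟩
    rcases mem_simplex.mp hq with ⟨j, rfl⟩
    have hij : i ≠ j := fun h => hpq (by rw [h])
    simp [dist_bvec hij]
  · rintro rfl
    exact ⟨bvec d 0, ⟨0, rfl⟩, bvec d 1, ⟨1, rfl⟩,
      bvec_ne (zero_ne_one_fin hd), dist_bvec (zero_ne_one_fin hd)⟩

lemma key_identity (K M c β : ℝ) (hKM : K + M ≠ 0) (hc : c = (1 - M*β)/(K+M)) :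
    (K+M) * ((K*c^2 + M*(c+β)^2) - 2*(c+β) - 1) = K*M*β^2 - 2*K*β - (K+M+1) := by
  subst hc
  field_simp
  ring

lemma sum_apply_eq {d : ℕ} (x : EuclideanSpace ℝ (Fin (d+1))) (c w : ℝ)
    (hcov : ∀ i, x i = c ∨ x i = w) (f : ℝ → ℝ) :
    ∑ j, f (x j) = ((Finset.univ.filter (fun i => x i = c)).card : ℝ) * f c
      + (((d:ℝ)+1) - ((Finset.univ.filter (fun i => x i = c)).card : ℝ)) * f w := by
  classical
  set A := Finset.univ.filter (fun i => x i = c) with hA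
  have hsplit := Finset.sum_filter_add_sum_filter_not Finset.univ (fun i => x i = c)
    (fun j => f (x j))
  have h1 : ∑ j ∈ A, f (x j) = (A.card : ℝ) * f c := by
    rw [Finset.sum_congr rfl (fun j hj => by
      rw [(Finset.mem_filter.mp hj).2]), Finset.sum_const, nsmul_eq_mul]
  have h2 : ∑ j ∈ Finset.univ.filter (fun i => ¬ x i = c), f (x j)
      = ((Finset.univ.filter (fun i => ¬ x i = c)).card : ℝ) * f w := by
    rw [Finset.sum_congr rfl (fun j hj => by
      rcases hcov j with h | h
      · exact absurd h (Finset.mem_filter.mp hj).2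
      · rw [h]), Finset.sum_const, nsmul_eq_mul]
  have hcard : A.card + (Finset.univ.filter (fun i => ¬ x i = c)).card = d + 1 := by
    rw [hA, Finset.card_filter_add_card_filter_not]
    simp
  rw [← hsplit, h1, h2]
  have hc2 : ((Finset.univ.filter (fun i => ¬ x i = c)).card : ℝ) = ((d:ℝ)+1) - (A.card : ℝ) := by
    have h3 := congrArg (Nat.cast : ℕ → ℝ) hcard
    push_cast at h3
    linarith
  rw [hc2]


lemma forward_two {d k : ℕ} (hd : 2 ≤ d) (hk1 : 1 ≤ k) (hkd : k ≤ d) {β : ℝ}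
    (hQ : (k:ℝ)*(((d:ℝ)+1)-(k:ℝ))*β^2 - 2*(k:ℝ)*β - ((d:ℝ)+2) = 0)
    (hβ1 : β ≠ -1)
    {x : EuclideanSpace ℝ (Fin (d+1))} (hxT : x ∈ Tset d k β) :
    IsTwoDistSet (simplex d ∪ {x}) := by
  obtain ⟨hH, hcov, hcard⟩ := hxT
  set c := cval d k β with hc
  have hD1 : ((d:ℝ)+1) ≠ 0 := by positivity
  have hβ0 : β ≠ 0 := by
    intro h; rw [h] at hQ
    have : (0:ℝ) ≤ (d:ℝ) := Nat.cast_nonneg d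
    nlinarith
  have hsetA : {i | x i = c} = ↑(Finset.univ.filter (fun i => x i = c)) := by
    ext i; simp
  rw [hsetA, Set.ncard_coe_finset] at hcard
  have hS := sum_apply_eq x c (c+β) hcov (fun t => t^2)
  rw [hcard] at hS
  have hcc : c = (1 - (((d:ℝ)+1)-(k:ℝ))*β)/((k:ℝ)+((((d:ℝ)+1)-(k:ℝ)))) := by
    rw [hc, cval]; rw [show (k:ℝ) + (((d:ℝ)+1)-(k:ℝ)) = (d:ℝ)+1 by ring]
  have hKM : (k:ℝ) + (((d:ℝ)+1)-(k:ℝ)) ≠ 0 := by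
    rw [show (k:ℝ) + (((d:ℝ)+1)-(k:ℝ)) = (d:ℝ)+1 by ring]; exact hD1
  have hkey := key_identity (k:ℝ) (((d:ℝ)+1)-(k:ℝ)) c β hKM hcc
  have hw : (∑ j, x j^2) + 1 - 2*(c+β) = 2 := by
    have h4 : ((k:ℝ) + (((d:ℝ)+1)-(k:ℝ))) *
        (((k:ℝ)*c^2 + (((d:ℝ)+1)-(k:ℝ))*(c+β)^2) - 2*(c+β) - 1) = 0 := by
      rw [hkey]; linear_combination hQ
    have h5 := (mul_eq_zero.mp h4).resolve_left hKM
    rw [hS]; linarith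
  have hvc : (∑ j, x j^2) + 1 - 2*c = 2 + 2*β := by linarith
  obtain ⟨i0, hi0⟩ : ∃ i, x i = c := by
    have hne : (Finset.univ.filter (fun i => x i = c)).Nonempty :=
      Finset.card_pos.mp (by omega)
    obtain ⟨i, hi⟩ := hne; exact ⟨i, (Finset.mem_filter.mp hi).2⟩
  have h2β : (0:ℝ) ≤ 2 + 2*β := by
    have h := dist_sq_single x i0
    rw [hi0, hvc] at h
    exact h ▸ sq_nonneg _
  have hvals : ∀ i, dist x (bvec d i) = Real.sqrt 2 ∨
      dist x (bvec d i) = Real.sqrt (2+2*β) := by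
    intro i
    rcases hcov i with h | h
    · right; rw [dist_single x i, h, hvc]
    · left; rw [dist_single x i, h, hw]
  have hxs : x ∉ simplex d := by
    intro hmem
    rcases mem_simplex.mp hmem with ⟨j, hj⟩
    have h0 : dist x (bvec d j) = 0 := by rw [hj]; simp
    have hsq := dist_sq_single x j
    rw [h0] at hsq
    norm_num at hsq
    rcases hcov j with h | h
    · rw [h] at hsq
      exact hβ1 (by linarith)
    · rw [h] at hsq
      linarith
  have hds := distSet_union hd x hxs
  have hseq : distSet (simplex d ∪ {x}) = {Real.sqrt 2, Real.sqrt (2+2*β)} := by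
    rw [hds]; ext r
    simp only [Set.mem_union, Set.mem_singleton_iff, Set.mem_range, Set.mem_insert_iff]
    constructor
    · rintro (rfl | ⟨i, rfl⟩)
      · exact Or.inl rfl
      · rcases hvals i with h | h
        · exact Or.inl h
        · exact Or.inr h
    · rintro (rfl | rfl)
      · exact Or.inl rfl
      · refine Or.inr ⟨i0, ?_⟩
        rw [dist_single x i0, hi0, hvc]
  have hne : Real.sqrt 2 ≠ Real.sqrt (2+2*β) := by
    intro h
    have := (Real.sqrt_inj (by norm_num) h2β).mp h
    exact hβ0 (by linarith)
  rw [IsTwoDistSet, hseq, Set.ncard_pair hne]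

lemma forward_const {d : ℕ} (hd : 2 ≤ d) {β : ℝ}
    {x : EuclideanSpace ℝ (Fin (d+1))} (hxT : x ∈ Tset d (d+1) β) :
    IsTwoDistSet (simplex d ∪ {x}) := by
  obtain ⟨hH, hcov, hcard⟩ := hxT
  set c := cval d (d+1) β with hc
  have hD1 : ((d:ℝ)+1) ≠ 0 := by positivity
  have hcval : c = 1/((d:ℝ)+1) := by rw [hc, cval]; push_cast; ring
  have hall : ∀ i, x i = c := by
    have huniv : {i | x i = c} = Set.univ := by
      apply Set.eq_of_subset_of_ncard_le (Set.subset_univ _)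
      simp [hcard, Set.ncard_univ]
    intro i
    have : i ∈ {i | x i = c} := huniv ▸ Set.mem_univ i
    exact this
  have hS : ∑ j, x j^2 = ((d:ℝ)+1) * c^2 := by
    rw [Finset.sum_congr rfl (fun j _ => by rw [hall j] : ∀ j ∈ Finset.univ, x j^2 = c^2)]
    rw [Finset.sum_const, nsmul_eq_mul, Finset.card_univ, Fintype.card_fin]
    push_cast; ring
  have hr : (∑ j, x j^2) + 1 - 2*c = (d:ℝ)/((d:ℝ)+1) := by
    rw [hS, hcval]; field_simp; ring
  have hxs : x ∉ simplex d := by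
    intro hmem
    rcases mem_simplex.mp hmem with ⟨j, hj⟩
    have h1 : x j = 1 := by rw [hj, bvec]; simp [EuclideanSpace.single_apply]
    rw [hall j, hcval] at h1
    have hd0 : (0:ℝ) < (d:ℝ) := by exact_mod_cast Nat.lt_of_lt_of_le Nat.zero_lt_two hd
    rw [div_eq_one_iff_eq hD1] at h1
    linarith
  have hds := distSet_union hd x hxs
  have hseq : distSet (simplex d ∪ {x}) =
      {Real.sqrt 2, Real.sqrt ((d:ℝ)/((d:ℝ)+1))} := by
    rw [hds]; ext r
    simp only [Set.mem_union, Set.mem_singleton_iff, Set.mem_range, Set.mem_insert_iff]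
    constructor
    · rintro (rfl | ⟨i, rfl⟩)
      · exact Or.inl rfl
      · refine Or.inr ?_
        rw [dist_single x i, hall i, hr]
    · rintro (rfl | rfl)
      · exact Or.inl rfl
      · refine Or.inr ⟨0, ?_⟩
        rw [dist_single x 0, hall 0, hr]
  have hd0 : (0:ℝ) < (d:ℝ) := by exact_mod_cast Nat.lt_of_lt_of_le Nat.zero_lt_two hd
  have hfr : (0:ℝ) ≤ (d:ℝ)/((d:ℝ)+1) := by positivity
  have hlt : (d:ℝ)/((d:ℝ)+1) < 2 := by
    rw [div_lt_iff₀ (by positivity)]; linarith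
  have hne : Real.sqrt 2 ≠ Real.sqrt ((d:ℝ)/((d:ℝ)+1)) := by
    intro h
    have := (Real.sqrt_inj (by norm_num) hfr).mp h
    linarith
  rw [IsTwoDistSet, hseq, Set.ncard_pair hne]


lemma backward_core {d : ℕ} (hd : 2 ≤ d) {x : EuclideanSpace ℝ (Fin (d+1))}
    (hx : x ∈ Hplane d) (hxs : x ∉ simplex d)
    (v w : ℝ) (hvw : v ≠ w) (hcov : ∀ i, x i = v ∨ x i = w)
    (i0 j0 : Fin (d+1)) (hi0 : x i0 = v) (hj0 : x j0 = w)
    (hw2 : dist x (bvec d j0) = Real.sqrt 2) :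
    ∃ k : ℕ, ∃ β : ℝ, 1 ≤ k ∧ k ≤ d + 1 ∧ betaCond d k β ∧ x ∈ Tset d k β := by
  classical
  set β := w - v with hβ
  have hβ0 : β ≠ 0 := sub_ne_zero.mpr (Ne.symm hvw)
  set A := Finset.univ.filter (fun i => x i = v) with hA
  set k := A.card with hk
  have hi0A : i0 ∈ A := Finset.mem_filter.mpr ⟨Finset.mem_univ _, hi0⟩
  have hj0A : j0 ∉ A := by
    rw [hA, Finset.mem_filter]
    rintro ⟨-, h⟩
    exact hvw (by rw [← hj0, h])
  have hk1 : 1 ≤ k := Finset.card_pos.mpr ⟨i0, hi0A⟩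
  have hkd : k ≤ d := by
    have hsub : A ⊆ Finset.univ.erase j0 := fun i hi =>
      Finset.mem_erase.mpr ⟨fun he => hj0A (he ▸ hi), Finset.mem_univ _⟩
    have hle := Finset.card_le_card hsub
    rw [Finset.card_erase_of_mem (Finset.mem_univ _), Finset.card_univ,
      Fintype.card_fin] at hle
    omega
  have hD1 : ((d:ℝ)+1) ≠ 0 := by positivity
  have hsum1 := sum_apply_eq x v w hcov (fun t => t)
  rw [← hA] at hsum1
  have hS := sum_apply_eq x v w hcov (fun t => t^2)
  rw [← hA] at hS
  have hxsum : (∑ j, x j) = 1 := hx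
  have h1 : (k:ℝ) * v + (((d:ℝ)+1) - (k:ℝ)) * w = 1 := by rw [← hsum1]; exact hxsum
  have hcv : v = cval d k β := by
    rw [cval, eq_div_iff hD1, hβ]
    linear_combination h1
  have h2 : (∑ j, x j^2) + 1 - 2*w = 2 := by
    have hds := dist_sq_single x j0
    rw [hw2, Real.sq_sqrt (by norm_num : (0:ℝ) ≤ 2), hj0] at hds
    linarith
  have hKM0 : (k:ℝ) + (((d:ℝ)+1)-(k:ℝ)) ≠ 0 := by
    rw [show (k:ℝ) + (((d:ℝ)+1)-(k:ℝ)) = (d:ℝ)+1 by ring]; exact hD1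
  have hcc : v = (1 - (((d:ℝ)+1)-(k:ℝ))*β)/((k:ℝ)+((((d:ℝ)+1)-(k:ℝ)))) := by
    rw [show (k:ℝ) + (((d:ℝ)+1)-(k:ℝ)) = (d:ℝ)+1 by ring]
    rw [hcv, cval]
  have hkey := key_identity (k:ℝ) (((d:ℝ)+1)-(k:ℝ)) v β hKM0 hcc
  have hvβ : v + β = w := by rw [hβ]; ring
  rw [hvβ] at hkey
  have h5 : (k:ℝ)*v^2 + (((d:ℝ)+1)-(k:ℝ))*w^2 - 2*w - 1 = 0 := by
    linarith [hS, h2]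
  have hQ : (k:ℝ)*(((d:ℝ)+1)-(k:ℝ))*β^2 - 2*(k:ℝ)*β - ((d:ℝ)+2) = 0 := by
    linear_combination (-1) * hkey + ((k:ℝ) + (((d:ℝ)+1)-(k:ℝ))) * h5
  have hTx : x ∈ Tset d k β := by
    refine ⟨hx, fun i => ?_, ?_⟩
    · rcases hcov i with h | h
      · exact Or.inl (h.trans hcv)
      · refine Or.inr ?_
        rw [h, ← hcv, hβ]; ring
    · have hset : {i | x i = cval d k β} = ↑A := by
        ext i
        simp only [Set.mem_setOf_eq, hA, Finset.coe_filter, Finset.mem_univ, true_and,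
          Set.mem_setOf_eq]
        rw [← hcv]
      rw [hset, Set.ncard_coe_finset]
  have hbc : betaCond d k β := by
    rcases Nat.lt_or_ge k 2 with hk2 | hk2
    · have hkeq : k = 1 := by omega
      have hK : (k:ℝ) = 1 := by rw [hkeq]; norm_num
      rw [hK] at hQ
      have hfac : ((d:ℝ)*β - ((d:ℝ)+2)) * (β + 1) = 0 := by linear_combination hQ
      have hd0 : (d:ℝ) ≠ 0 := by
        have : (0:ℝ) < (d:ℝ) := by exact_mod_cast Nat.lt_of_lt_of_le Nat.zero_lt_two hd
        linarith
      rcases mul_eq_zero.mp hfac with h | h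
      · refine Or.inl ⟨hkeq, ?_⟩
        rw [show (1:ℝ) + 2/(d:ℝ) = ((d:ℝ)+2)/(d:ℝ) by field_simp, eq_div_iff hd0]
        linarith
      · exfalso
        have hβval : β = -1 := by linarith
        have hvv : (∑ j, x j^2) + 1 - 2*v = 0 := by
          rw [hβ] at hβval
          linarith
        have hdd := dist_sq_single x i0
        rw [hi0, hvv] at hdd
        have hzero : dist x (bvec d i0) = 0 :=
          (pow_eq_zero_iff (by norm_num : (2:ℕ) ≠ 0)).mp hdd
        exact hxs (mem_simplex.mpr ⟨i0, dist_eq_zero.mp hzero⟩)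
    · refine Or.inr (Or.inr ⟨hk2, hkd, ?_⟩)
      have hK2 : (2:ℝ) ≤ (k:ℝ) := by exact_mod_cast hk2
      have hKd : (k:ℝ) ≤ (d:ℝ) := by exact_mod_cast hkd
      have hKM : (k:ℝ)*(((d:ℝ)+1)-(k:ℝ)) ≠ 0 :=
        mul_ne_zero (by linarith) (by linarith)
      have hDveq : (k:ℝ)*((d:ℝ)+1)*((d:ℝ)+2-(k:ℝ))
          = ((k:ℝ)*(((d:ℝ)+1)-(k:ℝ))*β - (k:ℝ))^2 := by
        linear_combination (-(k:ℝ)*(((d:ℝ)+1)-(k:ℝ))) * hQ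
      have hsq : Real.sqrt ((k:ℝ)*((d:ℝ)+1)*((d:ℝ)+2-(k:ℝ)))
          = |(k:ℝ)*(((d:ℝ)+1)-(k:ℝ))*β - (k:ℝ)| := by
        rw [hDveq, Real.sqrt_sq_eq_abs]
      rcases abs_cases ((k:ℝ)*(((d:ℝ)+1)-(k:ℝ))*β - (k:ℝ)) with ⟨ha, _⟩ | ⟨ha, _⟩
      · refine Or.inl ?_
        rw [hsq, ha, eq_div_iff hKM]; ring
      · refine Or.inr ?_
        rw [hsq, ha, eq_div_iff hKM]; ring
  exact ⟨k, β, hk1, by omega, hbc, hTx⟩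

end TwoDistAux

open TwoDistAux in
theorem stmt0 (d : ℕ) (hd : 2 ≤ d) (x : EuclideanSpace ℝ (Fin (d+1))) (hx : x ∈ Hplane d) :
    (∃ k : ℕ, ∃ β : ℝ, 1 ≤ k ∧ k ≤ d + 1 ∧ betaCond d k β ∧ x ∈ Tset d k β) ↔
      IsTwoDistSet (simplex d ∪ {x}) := by
  have hD1 : ((d:ℝ)+1) ≠ 0 := by positivity
  have hdpos : (0:ℝ) < (d:ℝ) := by exact_mod_cast Nat.lt_of_lt_of_le Nat.zero_lt_two hd
  constructor
  · rintro ⟨k, β, hk1, hkd1, hbc, hxT⟩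
    rcases hbc with ⟨hkeq, hβeq⟩ | ⟨hkeq, hβeq⟩ | ⟨hk2, hkd, hβor⟩
    · subst hkeq
      refine forward_two hd le_rfl (by omega) ?_ ?_ hxT
      · rw [hβeq]; push_cast; field_simp; ring
      · rw [hβeq]
        have : (0:ℝ) < 2/(d:ℝ) := by positivity
        intro hcon; linarith
    · subst hkeq; exact forward_const hd hxT
    · have hK2 : (2:ℝ) ≤ (k:ℝ) := by exact_mod_cast hk2
      have hKd : (k:ℝ) ≤ (d:ℝ) := by exact_mod_cast hkd
      have hKM : (k:ℝ)*(((d:ℝ)+1)-(k:ℝ)) ≠ 0 :=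
        mul_ne_zero (by linarith) (by linarith)
      have hDvnn : (0:ℝ) ≤ (k:ℝ)*((d:ℝ)+1)*((d:ℝ)+2-(k:ℝ)) :=
        mul_nonneg (mul_nonneg (by linarith) (by linarith)) (by linarith)
      have hss := Real.sq_sqrt hDvnn
      have hKMβ : (k:ℝ)*(((d:ℝ)+1)-(k:ℝ))*β = (k:ℝ) + Real.sqrt ((k:ℝ)*((d:ℝ)+1)*((d:ℝ)+2-(k:ℝ)))
          ∨ (k:ℝ)*(((d:ℝ)+1)-(k:ℝ))*β = (k:ℝ) - Real.sqrt ((k:ℝ)*((d:ℝ)+1)*((d:ℝ)+2-(k:ℝ))) := by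
        rcases hβor with hβeq | hβeq
        · left; rw [hβeq, mul_div_cancel₀ _ hKM]
        · right; rw [hβeq, mul_div_cancel₀ _ hKM]
      have hQ : (k:ℝ)*(((d:ℝ)+1)-(k:ℝ))*β^2 - 2*(k:ℝ)*β - ((d:ℝ)+2) = 0 := by
        have hQ' : ((k:ℝ)*(((d:ℝ)+1)-(k:ℝ))) *
            ((k:ℝ)*(((d:ℝ)+1)-(k:ℝ))*β^2 - 2*(k:ℝ)*β - ((d:ℝ)+2)) = 0 := by
          rcases hKMβ with h | h
          · have hsq : ((k:ℝ)*(((d:ℝ)+1)-(k:ℝ))*β)^2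
                = ((k:ℝ) + Real.sqrt ((k:ℝ)*((d:ℝ)+1)*((d:ℝ)+2-(k:ℝ))))^2 := by rw [h]
            linear_combination hsq - 2*(k:ℝ)*h + hss
          · have hsq : ((k:ℝ)*(((d:ℝ)+1)-(k:ℝ))*β)^2
                = ((k:ℝ) - Real.sqrt ((k:ℝ)*((d:ℝ)+1)*((d:ℝ)+2-(k:ℝ))))^2 := by rw [h]
            linear_combination hsq - 2*(k:ℝ)*h + hss
        exact (mul_eq_zero.mp hQ').resolve_left hKM
      have hβ1 : β ≠ -1 := by
        intro hcon
        rw [hcon] at hQ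
        nlinarith [mul_pos (by linarith : (0:ℝ) < (k:ℝ)-1)
          (by linarith : (0:ℝ) < (d:ℝ)+2-(k:ℝ))]
      exact forward_two hd (by omega) hkd hQ hβ1 hxT
  · intro h2
    rw [IsTwoDistSet] at h2
    have hxs : x ∉ simplex d := by
      intro hmem
      have hun : simplex d ∪ {x} = simplex d :=
        Set.union_eq_self_of_subset_right (by simpa using hmem)
      rw [hun, distSet_simplex hd, Set.ncard_singleton] at h2
      omega
    have hfin : (distSet (simplex d ∪ {x})).Finite := by
      by_contra hinf
      rw [Set.Infinite.ncard hinf] at h2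
      omega
    by_cases hconst : ∀ i, x i = x 0
    · refine ⟨d+1, -((d:ℝ)+2)/(2*((d:ℝ)+1)), by omega, le_refl _,
        Or.inr (Or.inl ⟨rfl, rfl⟩), ?_⟩
      have hcval : cval d (d+1) (-((d:ℝ)+2)/(2*((d:ℝ)+1))) = 1/((d:ℝ)+1) := by
        rw [cval]; push_cast; ring
      have hx0 : x 0 = 1/((d:ℝ)+1) := by
        have hsum : ∑ i, x i = 1 := hx
        rw [Finset.sum_congr rfl (fun i _ => hconst i), Finset.sum_const,
          Finset.card_univ, Fintype.card_fin, nsmul_eq_mul] at hsum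
        push_cast at hsum
        rw [eq_div_iff hD1]
        linarith
      have hallc : ∀ i, x i = cval d (d+1) (-((d:ℝ)+2)/(2*((d:ℝ)+1))) := by
        intro i; rw [hconst i, hx0, hcval]
      refine ⟨hx, fun i => Or.inl (hallc i), ?_⟩
      have huniv : {i | x i = cval d (d+1) (-((d:ℝ)+2)/(2*((d:ℝ)+1)))} = Set.univ :=
        Set.eq_univ_of_forall (fun i => hallc i)
      rw [huniv, Set.ncard_univ]
      simp
    · push_neg at hconst
      obtain ⟨i0, hne0⟩ := hconst
      have hcov : ∀ i, x i = x 0 ∨ x i = x i0 := by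
        intro i
        by_contra hcc
        push_neg at hcc
        obtain ⟨ha, hb⟩ := hcc
        have d1 := dist_single_ne x ha
        have d2 := dist_single_ne x hb
        have d3 := dist_single_ne x (Ne.symm hne0)
        have hsub : ({dist x (bvec d i), dist x (bvec d 0), dist x (bvec d i0)} : Set ℝ)
            ⊆ distSet (simplex d ∪ {x}) := by
          rw [distSet_union hd x hxs]
          rintro r (rfl | rfl | rfl)
          · exact Or.inr ⟨i, rfl⟩
          · exact Or.inr ⟨0, rfl⟩
          · exact Or.inr ⟨i0, rfl⟩
        have hcard3 : ({dist x (bvec d i), dist x (bvec d 0), dist x (bvec d i0)}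
            : Set ℝ).ncard = 3 := by
          rw [Set.ncard_insert_of_notMem (by simp [d1, d2]), Set.ncard_pair d3]
        have hle := Set.ncard_le_ncard hsub hfin
        rw [h2, hcard3] at hle
        omega
      have hDne : dist x (bvec d 0) ≠ dist x (bvec d i0) :=
        dist_single_ne x (Ne.symm hne0)
      have hs2 : Real.sqrt 2 = dist x (bvec d 0) ∨ Real.sqrt 2 = dist x (bvec d i0) := by
        by_contra hcc
        push_neg at hcc
        obtain ⟨ha, hb⟩ := hcc
        have hsub : ({Real.sqrt 2, dist x (bvec d 0), dist x (bvec d i0)} : Set ℝ)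
            ⊆ distSet (simplex d ∪ {x}) := by
          rw [distSet_union hd x hxs]
          rintro r (rfl | rfl | rfl)
          · exact Or.inl rfl
          · exact Or.inr ⟨0, rfl⟩
          · exact Or.inr ⟨i0, rfl⟩
        have hcard3 : ({Real.sqrt 2, dist x (bvec d 0), dist x (bvec d i0)}
            : Set ℝ).ncard = 3 := by
          rw [Set.ncard_insert_of_notMem (by simp [ha, hb]), Set.ncard_pair hDne]
        have hle := Set.ncard_le_ncard hsub hfin
        rw [h2, hcard3] at hle
        omega
      rcases hs2 with h | h
      · exact backward_core hd hx hxs (x i0) (x 0) hne0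
          (fun i => (hcov i).symm) i0 0 rfl rfl h.symm
      · exact backward_core hd hx hxs (x 0) (x i0) (fun hh => hne0 hh.symm)
          hcov 0 i0 rfl rfl h.symm
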